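/- Let (Ω, 𝓕, P) be a probability space, 𝔽 = (𝓕_t)_{t≥0} a filtration, and Z a random variable (with values in some measurable space) that is independent of 𝓕_∞ := ⋁_{t≥0} 𝓕_t. Let 𝔾 be the right-continuous regularization of the filtration (𝓕_t ∨ σ(Z))_{t≥0}. Then every 𝔽-martingale with right-continuous sample paths is a 𝔾-martingale (i.e. 𝔽 is immersed in 𝔾). -/

import Mathlib

open MeasureTheory ProbabilityTheory Filter Set
open scoped ENNReal Topology

noncomputable section

namespace InvMarkovJump

variable {Ω : Type*}

/-- `F` is a filtration (for times `t ≥ 0`) of sub-σ-algebras of `m0`. -/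
def IsFiltration (m0 : MeasurableSpace Ω) (F : ℝ → MeasurableSpace Ω) : Prop :=
  (∀ s t : ℝ, 0 ≤ s → s ≤ t → F s ≤ F t) ∧ ∀ t : ℝ, F t ≤ m0

/-- The right-continuous regularization `(⋂_{s > t} F s)_{t ≥ 0}` of a filtration. -/
def rcReg (F : ℝ → MeasurableSpace Ω) : ℝ → MeasurableSpace Ω :=
  fun t => ⨅ s ∈ Set.Ioi t, F s

/-- All sample paths of `M` are right-continuous (at every time `t ≥ 0`). -/
def RCPaths (M : ℝ → Ω → ℝ) : Prop :=
  ∀ ω, ∀ t : ℝ, 0 ≤ t → ContinuousWithinAt (fun s => M s ω) (Set.Ici t) t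

/-- `M` is a martingale (for times `t ≥ 0`) with respect to the filtration `F`
under the measure `μ`: it is adapted, integrable, and `E[M_t | F_s] = M_s` a.s.
for all `0 ≤ s ≤ t`. -/
def IsMartingale {m0 : MeasurableSpace Ω} (μ : Measure Ω)
    (F : ℝ → MeasurableSpace Ω) (M : ℝ → Ω → ℝ) : Prop :=
  (∀ t : ℝ, 0 ≤ t → Integrable (M t) μ) ∧
  (∀ t : ℝ, 0 ≤ t → Measurable[F t] (M t)) ∧
  ∀ s t : ℝ, 0 ≤ s → s ≤ t → μ[M t|F s] =ᵐ[μ] M s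

/-- `F` is immersed in `G`: `F ⊆ G` and every `F`-martingale (with right-continuous
sample paths) is a `G`-martingale. -/
def Immersed {m0 : MeasurableSpace Ω} (μ : Measure Ω)
    (F G : ℝ → MeasurableSpace Ω) : Prop :=
  (∀ t : ℝ, 0 ≤ t → F t ≤ G t) ∧
  ∀ M : ℝ → Ω → ℝ, RCPaths M → IsMartingale μ F M → IsMartingale μ G M

/-- The usual conditions: the filtration is right-continuous and `F 0` contains
all `μ`-null sets. -/
def UsualConditions {m0 : MeasurableSpace Ω} (μ : Measure Ω)
    (F : ℝ → MeasurableSpace Ω) : Prop :=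
  IsFiltration m0 F ∧ (∀ t : ℝ, 0 ≤ t → F t = rcReg F t) ∧
    ∀ s : Set Ω, μ s = 0 → MeasurableSet[F 0] s

/-- `E` is `Exp(1)`-distributed: `P(E > x) = e^{-x}` for all `x ≥ 0`. -/
def IsExpOne {m0 : MeasurableSpace Ω} (μ : Measure Ω) (E : Ω → ℝ) : Prop :=
  Measurable E ∧ ∀ x : ℝ, 0 ≤ x → μ {ω | x < E ω} = ENNReal.ofReal (Real.exp (-x))

/-- `F_∞ = ⋁_{t ≥ 0} F t`. -/
def Finfty (F : ℝ → MeasurableSpace Ω) : MeasurableSpace Ω :=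
  ⨆ t ∈ Set.Ici (0:ℝ), F t

/-- The natural filtration `(σ(Y_s : 0 ≤ s ≤ t))_{t ≥ 0}` of a process `Y`. -/
def natFilt {β : Type*} [MeasurableSpace β] (Y : ℝ → Ω → β) : ℝ → MeasurableSpace Ω :=
  fun t => ⨆ s ∈ Set.Icc (0:ℝ) t, MeasurableSpace.comap (Y s) inferInstance

/-- Progressive measurability of a process `u` with respect to the filtration `F`:
for every `t ≥ 0`, `(s, ω) ↦ u s ω` on `[0, t] × Ω` is `B([0,t]) ⊗ F t`-measurable. -/
def ProgMeas (F : ℝ → MeasurableSpace Ω) (u : ℝ → Ω → ℝ) : Prop :=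
  ∀ t : ℝ, 0 ≤ t →
    Measurable[MeasurableSpace.prod inferInstance (F t)]
      (fun p : Set.Icc (0:ℝ) t × Ω => u p.1 p.2)

theorem setIntegral_eq_on_sup {m₁ m₁' m₂ : MeasurableSpace Ω}
    {m0 : MeasurableSpace Ω} {μ : Measure Ω} [IsProbabilityMeasure μ]
    (h₁₁' : m₁ ≤ m₁') (hm₁' : m₁' ≤ m0) (hm₂ : m₂ ≤ m0)
    (hindep : Indep m₁' m₂ μ) {f g : Ω → ℝ}
    (hf : Integrable f μ) (hg : Integrable g μ)
    (hfm : Measurable[m₁'] f) (hgm : Measurable[m₁'] g)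
    (heq : ∀ B, MeasurableSet[m₁] B → ∫ x in B, f x ∂μ = ∫ x in B, g x ∂μ) :
    ∀ A, MeasurableSet[m₁ ⊔ m₂] A → ∫ x in A, f x ∂μ = ∫ x in A, g x ∂μ := by
  have hsup : m₁ ⊔ m₂ ≤ m0 := sup_le (h₁₁'.trans hm₁') hm₂
  set s : Set (Set Ω) :=
    {A | ∃ B C, MeasurableSet[m₁] B ∧ MeasurableSet[m₂] C ∧ A = B ∩ C} with hs_def
  have h_eq : m₁ ⊔ m₂ = MeasurableSpace.generateFrom s := by
    refine le_antisymm (sup_le ?_ ?_) (MeasurableSpace.generateFrom_le ?_)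
    · intro A hA
      exact MeasurableSpace.measurableSet_generateFrom
        ⟨A, Set.univ, hA, MeasurableSet.univ, (Set.inter_univ A).symm⟩
    · intro A hA
      exact MeasurableSpace.measurableSet_generateFrom
        ⟨Set.univ, A, MeasurableSet.univ, hA, (Set.univ_inter A).symm⟩
    · rintro A ⟨B, C, hB, hC, rfl⟩
      exact ((le_sup_left : m₁ ≤ m₁ ⊔ m₂) _ hB).inter ((le_sup_right : m₂ ≤ m₁ ⊔ m₂) _ hC)
  have h_pi : IsPiSystem s := by
    rintro A ⟨B, C, hB, hC, rfl⟩ A' ⟨B', C', hB', hC', rfl⟩ _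
    exact ⟨B ∩ B', C ∩ C', hB.inter hB', hC.inter hC', by
      ext x; simp [Set.mem_inter_iff]; tauto⟩
  intro A hA
  refine MeasurableSpace.induction_on_inter (m := m₁ ⊔ m₂)
    (C := fun A _ => ∫ x in A, f x ∂μ = ∫ x in A, g x ∂μ) h_eq h_pi ?_ ?_ ?_ ?_ A hA
  · simp
  · rintro A ⟨B, C, hB, hC, rfl⟩
    have hBm0 : MeasurableSet[m0] B := hm₁' _ (h₁₁' _ hB)
    have hCm0 : MeasurableSet[m0] C := hm₂ _ hC
    have key : ∀ h : Ω → ℝ, Integrable h μ → Measurable[m₁'] h →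
        ∫ x in B ∩ C, h x ∂μ = (∫ x in B, h x ∂μ) * (μ C).toReal := by
      intro h hint hmeas
      have h1C : Measurable[m₂] (C.indicator (1 : Ω → ℝ)) := measurable_const.indicator hC
      have hXY : IndepFun (B.indicator h) (C.indicator (1 : Ω → ℝ)) μ := by
        rw [IndepFun_iff_Indep]
        exact indep_of_indep_of_le_left
          (indep_of_indep_of_le_right hindep h1C.comap_le)
          ((hmeas.indicator (h₁₁' _ hB)).comap_le)
      have hBi : Measurable[m0] (B.indicator h) :=
        (hmeas.mono hm₁' le_rfl).indicator hBm0
      have hCi : Measurable[m0] (C.indicator (1 : Ω → ℝ)) := h1C.mono hm₂ le_rfl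
      have hmul := IndepFun.integral_fun_mul_eq_mul_integral hXY hBi.aestronglyMeasurable hCi.aestronglyMeasurable
      calc ∫ x in B ∩ C, h x ∂μ = ∫ x, (B ∩ C).indicator h x ∂μ :=
            (integral_indicator (hBm0.inter hCm0)).symm
        _ = ∫ x, B.indicator h x * C.indicator (1 : Ω → ℝ) x ∂μ := by
            congr 1
            funext ω
            by_cases hω : ω ∈ B <;> by_cases hω' : ω ∈ C <;>
              simp [Set.indicator_apply, Set.mem_inter_iff, hω, hω']
        _ = (∫ x, B.indicator h x ∂μ) * ∫ x, C.indicator (1 : Ω → ℝ) x ∂μ := hmul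
        _ = (∫ x in B, h x ∂μ) * (μ C).toReal := by
            rw [integral_indicator hBm0, integral_indicator_one hCm0, measureReal_def]
    rw [key f hf hfm, key g hg hgm, heq B hB]
  · intro A hAm ih
    have huniv := heq Set.univ MeasurableSet.univ
    rw [setIntegral_univ, setIntegral_univ] at huniv
    have h1 := integral_add_compl (hsup _ hAm) hf
    have h2 := integral_add_compl (hsup _ hAm) hg
    linarith
  · intro f' hdisj hmeas ih
    rw [integral_iUnion (fun i => hsup _ (hmeas i)) hdisj hf.integrableOn,
      integral_iUnion (fun i => hsup _ (hmeas i)) hdisj hg.integrableOn]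
    exact tsum_congr ih


/-- If `Z` is independent of `F_∞`, then `F` is immersed in the
right-continuous regularization of `(F t ∨ σ(Z))_t`. -/
theorem immersed_indep_enlargement {β : Type*} [MeasurableSpace β]
    {m0 : MeasurableSpace Ω} (μ : Measure Ω) [IsProbabilityMeasure μ]
    (F : ℝ → MeasurableSpace Ω) (hF : IsFiltration m0 F)
    (Z : Ω → β) (hZ : Measurable Z)
    (hindep : Indep (Finfty F) (MeasurableSpace.comap Z inferInstance) μ) :
    Immersed μ F (rcReg fun t => F t ⊔ MeasurableSpace.comap Z inferInstance) := by
  obtain ⟨hFmono, hFle0⟩ := hF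
  have hmZ : MeasurableSpace.comap Z inferInstance ≤ m0 := hZ.comap_le
  have hFinf : Finfty F ≤ m0 := iSup_le fun t => iSup_le fun _ => hFle0 t
  have hFle : ∀ t : ℝ, 0 ≤ t → F t ≤ Finfty F := fun t ht => le_biSup F ht
  have hFG : ∀ t : ℝ, 0 ≤ t →
      F t ≤ rcReg (fun t => F t ⊔ MeasurableSpace.comap Z inferInstance) t := by
    intro t ht
    refine le_iInf fun u => le_iInf fun hu => ?_
    exact (hFmono t u ht (le_of_lt hu)).trans le_sup_left
  have hGle : ∀ t : ℝ,
      rcReg (fun t => F t ⊔ MeasurableSpace.comap Z inferInstance) t ≤ m0 := by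
    intro t
    refine le_trans (iInf₂_le (t+1) (by simp)) ?_
    exact sup_le (hFle0 _) hmZ
  have key : ∀ M : ℝ → Ω → ℝ, IsMartingale μ F M → ∀ u t : ℝ, 0 ≤ u → u ≤ t →
      ∀ A, MeasurableSet[F u ⊔ MeasurableSpace.comap Z inferInstance] A →
        ∫ x in A, M u x ∂μ = ∫ x in A, M t x ∂μ := by
    intro M hM u t hu hut A hA
    have ht0 : 0 ≤ t := hu.trans hut
    refine setIntegral_eq_on_sup (hFle u hu) hFinf hmZ hindep (hM.1 u hu) (hM.1 t ht0)
      ((hM.2.1 u hu).mono (hFle u hu) le_rfl) ((hM.2.1 t ht0).mono (hFle t ht0) le_rfl)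
      ?_ A hA
    intro B hB
    have hc := hM.2.2 u t hu hut
    calc ∫ x in B, M u x ∂μ = ∫ x in B, (μ[M t|F u]) x ∂μ :=
          integral_congr_ae (ae_restrict_of_ae hc.symm)
      _ = ∫ x in B, M t x ∂μ := setIntegral_condExp (hFle0 u) (hM.1 t ht0) hB
  have hmart : ∀ M : ℝ → Ω → ℝ, RCPaths M → IsMartingale μ F M → ∀ s t : ℝ, 0 ≤ s → s ≤ t →
      μ[M t | rcReg (fun t => F t ⊔ MeasurableSpace.comap Z inferInstance) s] =ᵐ[μ] M s := by
    intro M hRC hM s t hs hst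
    have ht0 : 0 ≤ t := hs.trans hst
    refine (ae_eq_condExp_of_forall_setIntegral_eq (hGle s) (hM.1 t ht0)
      (fun A _ _ => (hM.1 s hs).integrableOn) ?_ ?_).symm
    · intro A hA _
      rcases eq_or_lt_of_le hst with rfl | hlt
      · rfl
      · set u : ℕ → ℝ := fun n => s + (t - s)/((n:ℝ)+1) with hu_def
        have hspos : 0 < t - s := sub_pos.2 hlt
        have hsu : ∀ n : ℕ, s < u n := fun n => by
          have h1 : 0 < (t - s)/((n:ℝ)+1) := div_pos hspos (by positivity)
          show s < s + (t - s)/((n:ℝ)+1)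
          linarith
        have hut : ∀ n : ℕ, u n ≤ t := fun n => by
          have h1 : (t - s)/((n:ℝ)+1) ≤ t - s := by
            refine div_le_self hspos.le ?_
            have : (0:ℝ) ≤ (n:ℝ) := Nat.cast_nonneg n
            linarith
          show s + (t - s)/((n:ℝ)+1) ≤ t
          linarith
        have hu0 : ∀ n : ℕ, 0 ≤ u n := fun n => hs.trans (hsu n).le
        have hulim : Tendsto u atTop (𝓝 s) := by
          have h1 : Tendsto (fun n : ℕ => (t - s)/((n:ℝ)+1)) atTop (𝓝 0) := by
            have h0 := tendsto_one_div_add_atTop_nhds_zero_nat.const_mul (t - s)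
            simpa [mul_one_div, div_eq_mul_inv] using h0
          have h2 := tendsto_const_nhds.add h1 (f := fun _ : ℕ => s) (x := atTop)
          simpa using h2
        have hAn : ∀ n : ℕ, MeasurableSet[F (u n) ⊔ MeasurableSpace.comap Z inferInstance] A :=
          fun n => (iInf₂_le (u n) (hsu n) :
            rcReg (fun t => F t ⊔ MeasurableSpace.comap Z inferInstance) s ≤ _) _ hA
        have hconst : ∀ n : ℕ, ∫ x in A, M (u n) x ∂μ = ∫ x in A, M t x ∂μ :=
          fun n => key M hM (u n) t (hu0 n) (hut n) A (hAn n)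
        have hgeq : ∀ n : ℕ, (μ[M t|F (u n)]) =ᵐ[μ] M (u n) :=
          fun n => hM.2.2 (u n) t (hu0 n) (hut n)
        have hui : UniformIntegrable (fun n : ℕ => μ[M t|F (u n)]) 1 μ :=
          (hM.1 t ht0).uniformIntegrable_condExp (fun n => hFle0 (u n))
        have hae : ∀ᵐ ω ∂μ, Tendsto (fun n : ℕ => (μ[M t|F (u n)]) ω) atTop (𝓝 (M s ω)) := by
          have hall : ∀ᵐ ω ∂μ, ∀ n : ℕ, (μ[M t|F (u n)]) ω = M (u n) ω :=
            ae_all_iff.2 (fun n => hgeq n)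
          filter_upwards [hall] with ω hω
          have hwithin : Tendsto u atTop (𝓝[Set.Ici s] s) :=
            tendsto_nhdsWithin_of_tendsto_nhds_of_eventually_within u hulim
              (Eventually.of_forall fun n => (hsu n).le)
          have h3 : Tendsto (fun n : ℕ => M (u n) ω) atTop (𝓝 (M s ω)) :=
            Tendsto.comp (hRC ω s hs) hwithin
          exact h3.congr fun n => (hω n).symm
        have hL1 : Tendsto (fun n : ℕ => eLpNorm ((μ[M t|F (u n)]) - M s) 1 μ) atTop (𝓝 0) :=
          tendsto_Lp_finite_of_tendsto_ae le_rfl ENNReal.one_ne_top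
            (fun n => (stronglyMeasurable_condExp.mono (hFle0 (u n))).aestronglyMeasurable)
            (memLp_one_iff_integrable.2 (hM.1 s hs)) hui.2.1 hae
        have hset : Tendsto (fun n : ℕ => ∫ x in A, (μ[M t|F (u n)]) x ∂μ) atTop
            (𝓝 (∫ x in A, M s x ∂μ)) :=
          tendsto_setIntegral_of_L1' (M s) (hM.1 s hs).1
            (Eventually.of_forall fun n => integrable_condExp) hL1 A
        have hseq2 : ∀ n : ℕ, ∫ x in A, (μ[M t|F (u n)]) x ∂μ = ∫ x in A, M t x ∂μ := fun n => by
          rw [integral_congr_ae (ae_restrict_of_ae (hgeq n))]; exact hconst n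
        simp only [hseq2] at hset
        exact tendsto_nhds_unique hset tendsto_const_nhds
    · exact StronglyMeasurable.aestronglyMeasurable
        (Measurable.stronglyMeasurable ((hM.2.1 s hs).mono (hFG s hs) le_rfl))
  exact ⟨hFG, fun M hRC hM => ⟨hM.1, fun t ht => (hM.2.1 t ht).mono (hFG t ht) le_rfl,
    fun s t hs hst => hmart M hRC hM s t hs hst⟩⟩

end InvMarkovJump
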